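/- Let m ≥ 2 be an even integer and n ≥ 1. Let c ∈ ℝ^n satisfy c_{i_1}+⋯+c_{i_m} ≠ 0 for all i_1,…,i_m ∈ {1,…,n}, and let C be the Cauchy tensor with generating vector c. Then the following statements are equivalent: (i) C is an SOS tensor; (ii) C is positive semi-definite; (iii) C is a completely positive tensor; (iv) c_i > 0 for all i ∈ {1,…,n}. -/

import Mathlib

open Finset MeasureTheory


/-- Every element of the closure of the convex hull of a compact set in a
finite-dimensional space is a finite nonnegative combination of points of the set. -/
lemma finite_comb_of_mem_closure_convexHull
    {E : Type*} [NormedAddCommGroup E] [NormedSpace ℝ E] [FiniteDimensional ℝ E]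
    {K : Set E} (hK : IsCompact K) (hne : K.Nonempty) {v : E}
    (hv : v ∈ closure (convexHull ℝ K)) :
    ∃ (r : ℕ) (w : Fin r → ℝ) (z : Fin r → E),
      (∀ k, 0 ≤ w k) ∧ (∀ k, z k ∈ K) ∧ ∑ k, w k • z k = v := by
  classical
  set D : ℕ := Module.finrank ℝ E + 1 with hD
  set Φ : (Fin D → ℝ) × (Fin D → E) → E := fun p => ∑ i, p.1 i • p.2 i with hΦ
  have hΦc : Continuous Φ := by
    apply continuous_finset_sum
    intro i _
    exact ((continuous_apply i).comp continuous_fst).smul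
      ((continuous_apply i).comp continuous_snd)
  set T : Set ((Fin D → ℝ) × (Fin D → E)) :=
    (stdSimplex ℝ (Fin D)) ×ˢ (Set.univ.pi fun _ => K) with hT
  have hTc : IsCompact T := (isCompact_stdSimplex ..).prod (isCompact_univ_pi fun _ => hK)
  have hCc : IsCompact (Φ '' T) := hTc.image hΦc
  have hsub : convexHull ℝ K ⊆ Φ '' T := by
    intro x hx
    obtain ⟨ι, hft, z, w, hzr, hai, hwpos, hwsum, hxz⟩ :=
      eq_pos_convex_span_of_mem_convexHull hx
    have hcard : Fintype.card ι ≤ D := by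
      calc Fintype.card ι ≤ Module.finrank ℝ (vectorSpan ℝ (Set.range z)) + 1 :=
            hai.card_le_finrank_succ
        _ ≤ D := by
            have := Submodule.finrank_le (vectorSpan ℝ (Set.range z))
            omega
    obtain ⟨e⟩ : Nonempty (ι ↪ Fin D) :=
      Function.Embedding.nonempty_of_card_le (by simpa using hcard)
    set w' : Fin D → ℝ := fun j => ∑ i : ι, if e i = j then w i else 0 with hw'
    set z' : Fin D → E := fun j => if h : ∃ i, e i = j then z h.choose else hne.some with hz'
    have hz'e : ∀ i : ι, z' (e i) = z i := by
      intro i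
      have h : ∃ i' : ι, e i' = e i := ⟨i, rfl⟩
      have : h.choose = i := e.injective h.choose_spec
      simp [hz', dif_pos h, this]
    have hz'K : ∀ j, z' j ∈ K := by
      intro j
      by_cases h : ∃ i : ι, e i = j
      · have : z' j = z h.choose := by simp only [hz', dif_pos h]
        rw [this]
        exact hzr (Set.mem_range_self _)
      · have : z' j = hne.some := by simp only [hz', dif_neg h]
        rw [this]
        exact hne.some_mem
    refine ⟨(w', z'), ⟨?_, ?_⟩, ?_⟩
    · constructor
      · intro j
        exact Finset.sum_nonneg fun i _ => by
          split_ifs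
          exacts [(hwpos i).le, le_rfl]
      · rw [← hwsum, Finset.sum_comm]
        apply Finset.sum_congr rfl
        intro i _
        simp
    · exact Set.mem_univ_pi.2 fun j => hz'K j
    · rw [← hxz]
      show ∑ j, w' j • z' j = _
      have : ∀ j, w' j • z' j = ∑ i : ι, if e i = j then w i • z' (e i) else 0 := by
        intro j
        rw [hw', Finset.sum_smul]
        apply Finset.sum_congr rfl
        intro i _
        split_ifs with h
        · rw [h]
        · simp
      simp_rw [this]
      rw [Finset.sum_comm]
      apply Finset.sum_congr rfl
      intro i _
      rw [Finset.sum_ite_eq Finset.univ (e i) (fun _ => w i • z' (e i)), if_pos (mem_univ _),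
        hz'e]
  have hvmem : v ∈ Φ '' T :=
    closure_minimal hsub hCc.isClosed hv
  obtain ⟨⟨w, z⟩, ⟨hws, hzs⟩, hvz⟩ := hvmem
  exact ⟨D, w, z, fun k => hws.1 k, fun k => Set.mem_univ_pi.1 hzs k,
    by simpa [hΦ] using hvz⟩


/-- `A x^m = ∑_{i_1,…,i_m} a_{i_1⋯i_m} x_{i_1}⋯x_{i_m}` for an order `m` dimension `n` tensor. -/
noncomputable def tApply (m n : ℕ) (a : (Fin m → Fin n) → ℝ) (x : Fin n → ℝ) : ℝ :=
  ∑ i : Fin m → Fin n, a i * ∏ j, x (i j)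

/-- An (even order) tensor is positive semi-definite if `A x^m ≥ 0` for all `x`. -/
def IsPSD (m n : ℕ) (a : (Fin m → Fin n) → ℝ) : Prop :=
  ∀ x : Fin n → ℝ, 0 ≤ tApply m n a x

/-- Cauchy tensor with generating vector `c`: entries `1 / (c_{i_1}+⋯+c_{i_m})`. -/
noncomputable def cauchyT (m n : ℕ) (c : Fin n → ℝ) : (Fin m → Fin n) → ℝ :=
  fun i => 1 / (∑ j, c (i j))

/-- A tensor of even order `m` is an SOS tensor if the form `A x^m` is a finite sum of squares
of homogeneous polynomials of degree `m/2`. -/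
def IsSOS (m n : ℕ) (a : (Fin m → Fin n) → ℝ) : Prop :=
  ∃ (r : ℕ) (p : Fin r → MvPolynomial (Fin n) ℝ),
    (∀ k, (p k).IsHomogeneous (m / 2)) ∧
    ∀ x : Fin n → ℝ, tApply m n a x = ∑ k, (MvPolynomial.eval x (p k)) ^ 2

/-- A tensor is completely positive if it is a finite sum of `m`-th rank-one powers `u^m`
with nonnegative vectors `u`. -/
def IsCompletelyPositive (m n : ℕ) (a : (Fin m → Fin n) → ℝ) : Prop :=
  ∃ (r : ℕ) (u : Fin r → Fin n → ℝ), (∀ k l, 0 ≤ u k l) ∧ ∀ i, a i = ∑ k, ∏ j, u k (i j)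

/-- Corollary 3.1: for an even order Cauchy tensor, the SOS property, positive
semi-definiteness, complete positivity and positivity of the generating vector
are all equivalent. -/
lemma cp_of_pos (m n : ℕ) (hm : 2 ≤ m) (c : Fin n → ℝ) (hpos : ∀ i, 0 < c i) :
    IsCompletelyPositive m n (cauchyT m n c) := by
  classical
  haveI : NeZero m := ⟨by omega⟩
  set K : ℝ := 1 + ∑ l, (c l)⁻¹ with hKdef
  have hK : 0 < K := by
    have : 0 ≤ ∑ l, (c l)⁻¹ := Finset.sum_nonneg fun l _ => (inv_pos.2 (hpos l)).le
    rw [hKdef]; linarith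
  have hKc : ∀ l, 1 < K * c l := by
    intro l
    have h1 : (c l)⁻¹ < K := by
      have : (c l)⁻¹ ≤ ∑ l', (c l')⁻¹ :=
        Finset.single_le_sum (fun l' _ => (inv_pos.2 (hpos l')).le) (mem_univ l)
      rw [hKdef]; linarith
    calc (1:ℝ) = (c l)⁻¹ * c l := (inv_mul_cancel₀ (hpos l).ne').symm
      _ < K * c l := by exact mul_lt_mul_of_pos_right h1 (hpos l)
  set s : (Fin m → Fin n) → ℝ := fun i => ∑ j, c (i j) with hsdef
  have hp : ∀ i, 0 < K * s i - 1 := by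
    intro i
    have : (m : ℝ) * 1 ≤ ∑ j : Fin m, K * c (i j) := by
      calc (m : ℝ) * 1 = ∑ _j : Fin m, (1:ℝ) := by simp
        _ ≤ ∑ j : Fin m, K * c (i j) := Finset.sum_le_sum fun j _ => (hKc (i j)).le
    have hms : K * s i = ∑ j : Fin m, K * c (i j) := by
      rw [hsdef, Finset.mul_sum]
    have hm2 : (2:ℝ) ≤ (m:ℝ) := by exact_mod_cast hm
    nlinarith
  set g : ℝ → ((Fin m → Fin n) → ℝ) := fun t i => K * t ^ (K * s i - 1) with hgdef
  have hgc : Continuous g := by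
    apply continuous_pi
    intro i
    exact continuous_const.mul (Real.continuous_rpow_const (hp i).le)
  set μ : Measure ℝ := volume.restrict (Set.Icc (0:ℝ) 1) with hmu
  haveI : IsProbabilityMeasure μ := ⟨by
    rw [hmu, Measure.restrict_apply_univ, Real.volume_Icc]
    norm_num⟩
  have hgint : Integrable g μ := hgc.integrableOn_Icc
  have hvint : ∫ t, g t ∂μ = cauchyT m n c := by
    funext i
    have h1 : (∫ t, g t ∂μ) i = ∫ t, g t i ∂μ :=
      ((ContinuousLinearMap.proj (R := ℝ) (φ := fun _ : Fin m → Fin n => ℝ)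
        i).integral_comp_comm hgint).symm
    rw [h1]
    have h2 : ∫ t, g t i ∂μ = ∫ t in (0:ℝ)..1, K * t ^ (K * s i - 1) := by
      rw [hmu, MeasureTheory.integral_Icc_eq_integral_Ioc,
        ← intervalIntegral.integral_of_le zero_le_one]
    rw [h2, intervalIntegral.integral_const_mul, integral_rpow (Or.inl (by linarith [hp i]))]
    have hKs : K * s i - 1 + 1 = K * s i := by ring
    rw [hKs, Real.one_rpow, Real.zero_rpow (by linarith [hp i] : K * s i ≠ 0)]
    have hsi : 0 < s i := by nlinarith [hp i, hK]
    show K * ((1 - 0) / (K * s i)) = 1 / s i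
    field_simp
    norm_num
  have hcomp : IsCompact (g '' Set.Icc (0:ℝ) 1) := isCompact_Icc.image hgc
  have hne : (g '' Set.Icc (0:ℝ) 1).Nonempty :=
    (Set.nonempty_Icc.2 zero_le_one).image g
  have hvmem : cauchyT m n c ∈ closure (convexHull ℝ (g '' Set.Icc (0:ℝ) 1)) := by
    rw [← hvint]
    apply (convex_convexHull ℝ _).closure.integral_mem isClosed_closure _ hgint
    refine (ae_restrict_mem measurableSet_Icc).mono fun t ht => ?_
    exact subset_closure (subset_convexHull ℝ _ (Set.mem_image_of_mem g ht))
  obtain ⟨r, w, z, hw, hz, hsum⟩ :=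
    finite_comb_of_mem_closure_convexHull hcomp hne hvmem
  choose t ht hgt using hz
  set u : Fin r → Fin n → ℝ :=
    fun k l => (w k * K) ^ ((m:ℝ)⁻¹) * (t k) ^ (K * c l - (m:ℝ)⁻¹) with hudef
  have hminv : (0:ℝ) < (m:ℝ)⁻¹ := by positivity
  have hminv1 : ((m:ℝ))⁻¹ ≤ 1 := by
    rw [inv_le_one_iff₀]
    right
    exact_mod_cast le_trans one_le_two hm
  refine ⟨r, u, fun k l => mul_nonneg (Real.rpow_nonneg
      (mul_nonneg (hw k) hK.le) _) (Real.rpow_nonneg (ht k).1 _), ?_⟩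
  intro i
  have key : ∀ k, ∏ j, u k (i j) = w k * (K * (t k) ^ (K * s i - 1)) := by
    intro k
    rw [hudef]
    rw [Finset.prod_mul_distrib, Finset.prod_const, Finset.card_univ, Fintype.card_fin]
    have e1 : ((w k * K) ^ ((m:ℝ)⁻¹)) ^ m = w k * K := by
      rw [← Real.rpow_natCast ((w k * K) ^ ((m:ℝ)⁻¹)) m,
        ← Real.rpow_mul (mul_nonneg (hw k) hK.le),
        inv_mul_cancel₀ (by exact_mod_cast (by omega : m ≠ 0) : (m:ℝ) ≠ 0),
        Real.rpow_one]
    have e2 : ∏ j, (t k) ^ (K * c (i j) - (m:ℝ)⁻¹) = (t k) ^ (K * s i - 1) := by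
      rw [← Real.rpow_sum_of_nonneg (ht k).1
        (fun j _ => sub_nonneg.2 (le_trans hminv1 (hKc (i j)).le))]
      congr 1
      rw [Finset.sum_sub_distrib, Finset.sum_const, Finset.card_univ, Fintype.card_fin,
        ← Finset.mul_sum, nsmul_eq_mul,
        mul_inv_cancel₀ (by exact_mod_cast (by omega : m ≠ 0) : (m:ℝ) ≠ 0)]
    rw [e1, e2]
    ring
  have hz' : ∀ k, z k i = K * (t k) ^ (K * s i - 1) := by
    intro k
    rw [← hgt k]
  calc cauchyT m n c i = (∑ k, w k • z k) i := by rw [hsum]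
    _ = ∑ k, w k * z k i := by rw [Finset.sum_apply]; simp
    _ = ∑ k, ∏ j, u k (i j) := by
        apply Finset.sum_congr rfl
        intro k _
        rw [key, hz']


theorem stmt_3 (m n : ℕ) (hm : 2 ≤ m) (hme : Even m) (hn : 1 ≤ n)
    (c : Fin n → ℝ)
    (hc : ∀ i : Fin m → Fin n, ∑ j, c (i j) ≠ 0) :
    List.TFAE [IsSOS m n (cauchyT m n c),
               IsPSD m n (cauchyT m n c),
               IsCompletelyPositive m n (cauchyT m n c),
               ∀ i : Fin n, 0 < c i] := by
  tfae_have 1 → 2 := by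
    rintro ⟨r, p, hh, hev⟩ x
    rw [hev]
    exact Finset.sum_nonneg fun k _ => sq_nonneg _
  tfae_have 2 → 4 := by
    intro hpsd i
    classical
    have hval : tApply m n (cauchyT m n c) (Pi.single i 1) = 1 / ((m:ℝ) * c i) := by
      unfold tApply
      rw [Finset.sum_eq_single (fun _ : Fin m => i)]
      · rw [cauchyT]
        simp [Finset.sum_const, Finset.card_univ, mul_comm]
      · intro τ _ hτ
        obtain ⟨j, hj⟩ : ∃ j, τ j ≠ i := by
          by_contra h
          push_neg at h
          exact hτ (funext h)
        rw [Finset.prod_eq_zero (mem_univ j) (by simp [Pi.single_eq_of_ne hj]), mul_zero]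
      · intro h
        exact absurd (mem_univ _) h
    have h0 : (m:ℝ) * c i ≠ 0 := by
      have := hc (fun _ => i)
      simpa [Finset.sum_const, Finset.card_univ, mul_comm] using this
    have h1 : 0 ≤ 1 / ((m:ℝ) * c i) := hval ▸ hpsd _
    have h2 : 0 < (m:ℝ) * c i :=
      one_div_pos.1 (lt_of_le_of_ne h1 (Ne.symm (one_div_ne_zero h0)))
    have hm0 : (0:ℝ) < m := by exact_mod_cast (by omega : 0 < m)
    nlinarith
  tfae_have 4 → 3 := cp_of_pos m n hm c
  tfae_have 3 → 1 := by
    rintro ⟨r, u, hu, hau⟩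
    refine ⟨r, fun k => (∑ l, MvPolynomial.C (u k l) * MvPolynomial.X l) ^ (m / 2), ?_, ?_⟩
    · intro k
      have h1 : (∑ l, MvPolynomial.C (u k l) * MvPolynomial.X l :
          MvPolynomial (Fin n) ℝ).IsHomogeneous 1 :=
        MvPolynomial.IsHomogeneous.sum _ _ _ fun l _ => MvPolynomial.isHomogeneous_C_mul_X _ _
      simpa using h1.pow (m / 2)
    · intro x
      have heval : ∀ k, MvPolynomial.eval x
          ((∑ l, MvPolynomial.C (u k l) * MvPolynomial.X l) ^ (m / 2))
          = (∑ l, u k l * x l) ^ (m / 2) := by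
        intro k
        simp [MvPolynomial.eval_pow]
      calc tApply m n (cauchyT m n c) x
          = ∑ i : Fin m → Fin n, ∑ k, ∏ j, (u k (i j) * x (i j)) := by
            unfold tApply
            apply Finset.sum_congr rfl
            intro i _
            rw [hau, Finset.sum_mul]
            simp_rw [← Finset.prod_mul_distrib]
        _ = ∑ k, ∑ i : Fin m → Fin n, ∏ j, (u k (i j) * x (i j)) := Finset.sum_comm
        _ = ∑ k, (∑ l, u k l * x l) ^ m := by
            apply Finset.sum_congr rfl
            intro k _
            have hps := Finset.prod_univ_sum (fun _ : Fin m => (univ : Finset (Fin n)))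
              (fun _ l => u k l * x l)
            rw [Fintype.piFinset_univ] at hps
            rw [← hps, Finset.prod_const, Finset.card_univ, Fintype.card_fin]
        _ = _ := by
            apply Finset.sum_congr rfl
            intro k _
            rw [heval, ← pow_mul, Nat.div_mul_cancel hme.two_dvd]
  tfae_finish
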